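/- Let F be a field, l > 1 an integer coprime to the characteristic of F, ξ ∈ F a primitive l-th root of unity, and m a positive integer. Then the generalized Clifford algebra Clg(l,m) has dimension l^m over F; more precisely, the images of the ordered monomials x₁^{k₁} x₂^{k₂} ⋯ x_m^{k_m} with 0 ≤ k_i ≤ l−1 form an F-basis of Clg(l,m). -/

import Mathlib

/-- The defining relations of the generalized Clifford algebra: `xᵢ^l = 1` and
`xⱼ xᵢ = ξ • (xᵢ xⱼ)` for `i < j`. -/
inductive ClgRel (F : Type*) [Field F] (l : ℕ) (ξ : F) {I : Type*} [LinearOrder I] :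
    FreeAlgebra F I → FreeAlgebra F I → Prop
  | pow (i : I) : ClgRel F l ξ (FreeAlgebra.ι F i ^ l) 1
  | comm {i j : I} (hij : i < j) :
      ClgRel F l ξ (FreeAlgebra.ι F j * FreeAlgebra.ι F i)
        (ξ • (FreeAlgebra.ι F i * FreeAlgebra.ι F j))

/-- The generalized Clifford algebra on a linearly ordered set of generators. -/
abbrev Clg (F : Type*) [Field F] (l : ℕ) (ξ : F) (I : Type*) [LinearOrder I] :=
  RingQuot (ClgRel F l ξ (I := I))

/-- The generators `xᵢ` of the generalized Clifford algebra. -/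
noncomputable def ClgGen (F : Type*) [Field F] (l : ℕ) (ξ : F) (I : Type*)
    [LinearOrder I] (i : I) : Clg F l ξ I :=
  RingQuot.mkAlgHom F (ClgRel F l ξ) (FreeAlgebra.ι F i)


section ClgAux

variable {F : Type*} [Field F] {l : ℕ} {ξ : F} {m : ℕ}

/-- `ξ ^ a.val` for `a : ZMod l`. -/
def clgZeta (ξ : F) {l : ℕ} (a : ZMod l) : F := ξ ^ a.val

lemma clgPow_mod (hξl : ξ ^ l = 1) (x : ℕ) : ξ ^ (x % l) = ξ ^ x := by
  conv_rhs => rw [← Nat.div_add_mod x l]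
  rw [pow_add, pow_mul, hξl, one_pow, one_mul]

lemma clgZeta_add [NeZero l] (hξl : ξ ^ l = 1) (a b : ZMod l) :
    clgZeta ξ (a + b) = clgZeta ξ a * clgZeta ξ b := by
  unfold clgZeta
  rw [ZMod.val_add, clgPow_mod hξl, pow_add]

lemma clgZeta_zero [NeZero l] : clgZeta ξ (0 : ZMod l) = 1 := by
  simp [clgZeta]

lemma clgZeta_one (hl : 1 < l) : clgZeta ξ (1 : ZMod l) = ξ := by
  haveI : Fact (1 < l) := ⟨hl⟩
  simp [clgZeta, ZMod.val_one]

/-- The standard basis of the representation space. -/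
noncomputable def clgB (F : Type*) [Field F] (l m : ℕ) [NeZero l] :
    Module.Basis (Fin m → ZMod l) F ((Fin m → ZMod l) → F) :=
  Pi.basisFun F _

/-- The operator representing the generator `xᵢ`. -/
noncomputable def clgXop (ξ : F) {l : ℕ} [NeZero l] {m : ℕ} (i : Fin m) :
    ((Fin m → ZMod l) → F) →ₗ[F] ((Fin m → ZMod l) → F) :=
  (clgB F l m).constr F fun k =>
    clgZeta ξ (∑ t ∈ Finset.Iio i, k t) • clgB F l m (Function.update k i (k i + 1))

lemma clgXop_apply [NeZero l] (i : Fin m) (k : Fin m → ZMod l) :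
    clgXop ξ i (clgB F l m k) =
      clgZeta ξ (∑ t ∈ Finset.Iio i, k t) • clgB F l m (Function.update k i (k i + 1)) :=
  Module.Basis.constr_basis _ _ _ _

lemma clgXop_pow [NeZero l] (hξl : ξ ^ l = 1) (i : Fin m) (n : ℕ) (k : Fin m → ZMod l) :
    (clgXop ξ i ^ n) (clgB F l m k) =
      clgZeta ξ (∑ t ∈ Finset.Iio i, k t) ^ n •
        clgB F l m (Function.update k i (k i + (n : ZMod l))) := by
  induction n with
  | zero => simp
  | succ n ih =>
    rw [pow_succ', Module.End.mul_apply, ih, map_smul, clgXop_apply]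
    have hsum : ∑ t ∈ Finset.Iio i, Function.update k i (k i + (n : ZMod l)) t
        = ∑ t ∈ Finset.Iio i, k t := by
      refine Finset.sum_congr rfl fun t ht => ?_
      exact Function.update_of_ne (Finset.mem_Iio.mp ht).ne _ _
    rw [hsum, smul_smul, ← pow_succ]
    congr 2
    rw [Function.update_idem, Function.update_self]
    push_cast
    ring_nf

lemma clgXop_pow_l [NeZero l] (hξl : ξ ^ l = 1) (i : Fin m) :
    clgXop ξ i ^ l = (1 : Module.End F ((Fin m → ZMod l) → F)) := by
  refine (clgB F l m).ext fun k => ?_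
  rw [clgXop_pow hξl, Module.End.one_apply]
  have h1 : clgZeta ξ (∑ t ∈ Finset.Iio i, k t) ^ l = 1 := by
    rw [clgZeta, ← pow_mul, mul_comm, pow_mul, hξl, one_pow]
  rw [h1, one_smul, ZMod.natCast_self, add_zero, Function.update_eq_self]

lemma clgXop_comm [NeZero l] (hl : 1 < l) (hξl : ξ ^ l = 1) {i j : Fin m} (hij : i < j) :
    clgXop ξ (l := l) j * clgXop ξ i = ξ • (clgXop ξ i * clgXop ξ j) := by
  refine (clgB F l m).ext fun k => ?_
  rw [Module.End.mul_apply, LinearMap.smul_apply, Module.End.mul_apply,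
    clgXop_apply, clgXop_apply, map_smul, map_smul, clgXop_apply, clgXop_apply]
  have hij' : i ≠ j := hij.ne
  have hsj : ∑ t ∈ Finset.Iio j, Function.update k i (k i + 1) t
      = (∑ t ∈ Finset.Iio j, k t) + 1 := by
    rw [Finset.sum_update_of_mem (Finset.mem_Iio.mpr hij)]
    rw [add_comm (k i + 1), ← add_assoc, Finset.sum_sdiff_eq_sub
      (Finset.singleton_subset_iff.mpr (Finset.mem_Iio.mpr hij))]
    simp [add_comm, add_assoc, sub_add_cancel]
  have hsi : ∑ t ∈ Finset.Iio i, Function.update k j (k j + 1) t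
      = ∑ t ∈ Finset.Iio i, k t := by
    refine Finset.sum_congr rfl fun t ht => ?_
    exact Function.update_of_ne ((Finset.mem_Iio.mp ht).trans hij).ne _ _
  rw [hsj, hsi]
  have hvec : Function.update (Function.update k i (k i + 1)) j
        (Function.update k i (k i + 1) j + 1)
      = Function.update (Function.update k j (k j + 1)) i
        (Function.update k j (k j + 1) i + 1) := by
    rw [Function.update_of_ne hij'.symm, Function.update_of_ne hij',
      Function.update_comm hij']
  rw [hvec, smul_smul, smul_smul, smul_smul, clgZeta_add hξl, clgZeta_one hl]
  congr 1
  ring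

/-- The representation of the generalized Clifford algebra on `(Fin m → ZMod l) → F`. -/
noncomputable def clgRep (F : Type*) [Field F] (l : ℕ) (ξ : F) (m : ℕ) [NeZero l]
    (hl : 1 < l) (hξl : ξ ^ l = 1) :
    Clg F l ξ (Fin m) →ₐ[F] Module.End F ((Fin m → ZMod l) → F) :=
  RingQuot.liftAlgHom F ⟨FreeAlgebra.lift F fun i => clgXop ξ i, by
    intro x y h
    induction h with
    | pow i => simp [map_pow, FreeAlgebra.lift_ι_apply, clgXop_pow_l hξl]
    | comm hij =>
      simp only [map_mul, map_smul, FreeAlgebra.lift_ι_apply]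
      exact clgXop_comm hl hξl hij⟩

lemma clgRep_gen [NeZero l] (hl : 1 < l) (hξl : ξ ^ l = 1) (i : Fin m) :
    clgRep F l ξ m hl hξl (ClgGen F l ξ (Fin m) i) = clgXop ξ i := by
  rw [ClgGen, clgRep, RingQuot.liftAlgHom_mkAlgHom_apply, FreeAlgebra.lift_ι_apply]

lemma clg_tail [NeZero l] (hξl : ξ ^ l = 1) (k : Fin m → Fin l) :
    ∀ d n, n + d = m →
      ((((List.finRange m).drop n).map fun t => clgXop ξ t ^ (k t : ℕ)).prod) (clgB F l m 0)
        = clgB F l m (fun t => if n ≤ (t : ℕ) then ((k t : ℕ) : ZMod l) else 0) := by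
  intro d
  induction d with
  | zero =>
    intro n hn
    subst hn
    rw [List.drop_of_length_le (by simp)]
    simp only [List.map_nil, List.prod_nil, Module.End.one_apply]
    have h0 : (fun t : Fin (n + 0) => if n ≤ (t : ℕ) then ((k t : ℕ) : ZMod l) else 0)
        = 0 := by
      funext t
      have ht := t.isLt
      simp only [Pi.zero_apply]
      rw [if_neg (by omega)]
    rw [h0]
  | succ d ih =>
    intro n hn
    have hnm : n < m := by omega
    have hlen : n < (List.finRange m).length := by simpa using hnm
    rw [List.drop_eq_getElem_cons hlen, List.map_cons, List.prod_cons,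
      Module.End.mul_apply, ih (n + 1) (by omega)]
    have hi : ((List.finRange m)[n] : Fin m) = ⟨n, hnm⟩ := by
      simp [List.getElem_finRange, Fin.cast]
    rw [hi, clgXop_pow hξl]
    have hsum : (∑ t ∈ Finset.Iio (⟨n, hnm⟩ : Fin m),
        (fun t : Fin m => if n + 1 ≤ (t : ℕ) then ((k t : ℕ) : ZMod l) else 0) t) = 0 := by
      refine Finset.sum_eq_zero fun t ht => ?_
      have h3' := Finset.mem_Iio.mp ht
      have h3 : (t : ℕ) < n := h3'
      rw [if_neg (by omega)]
    rw [hsum]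
    have h1 : clgZeta ξ (0 : ZMod l) ^ ((k ⟨n, hnm⟩ : ℕ)) = 1 := by
      rw [clgZeta_zero, one_pow]
    rw [h1, one_smul]
    congr 1
    funext t
    by_cases ht : t = (⟨n, hnm⟩ : Fin m)
    · subst ht
      have hval : ((⟨n, hnm⟩ : Fin m) : ℕ) = n := rfl
      rw [Function.update_self, if_neg (by rw [hval]; omega), if_pos (by rw [hval]),
        zero_add]
    · rw [Function.update_of_ne ht]
      have hne : (t : ℕ) ≠ n := fun h => ht (Fin.ext h)
      by_cases h2 : n + 1 ≤ (t : ℕ)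
      · rw [if_pos h2, if_pos (by omega)]
      · rw [if_neg h2, if_neg (by omega)]

lemma clg_eval [NeZero l] (hl : 1 < l) (hξl : ξ ^ l = 1) (k : Fin m → Fin l) :
    clgRep F l ξ m hl hξl
        (((List.finRange m).map fun i => ClgGen F l ξ (Fin m) i ^ (k i : ℕ)).prod)
        (clgB F l m 0)
      = clgB F l m (fun t => ((k t : ℕ) : ZMod l)) := by
  rw [map_list_prod, List.map_map]
  have hfun : ((clgRep F l ξ m hl hξl) ∘ fun i => ClgGen F l ξ (Fin m) i ^ (k i : ℕ))
      = fun t => clgXop ξ t ^ (k t : ℕ) := by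
    funext t
    simp [Function.comp, map_pow, clgRep_gen hl hξl]
  rw [hfun]
  have := clg_tail (F := F) hξl k m 0 (by omega)
  rw [List.drop_zero] at this
  rw [this]
  congr 1

lemma clgGen_pow_l (i : Fin m) : ClgGen F l ξ (Fin m) i ^ l = 1 := by
  have h := RingQuot.mkAlgHom_rel F (ClgRel.pow (F := F) (l := l) (ξ := ξ) (I := Fin m) i)
  rw [map_pow, map_one] at h
  exact h

lemma clgGen_pow_mod (i : Fin m) (n : ℕ) :
    ClgGen F l ξ (Fin m) i ^ n = ClgGen F l ξ (Fin m) i ^ (n % l) := by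
  conv_lhs => rw [← Nat.div_add_mod n l]
  rw [pow_add, pow_mul, clgGen_pow_l, one_pow, one_mul]

lemma clgGen_comm {i j : Fin m} (hij : i < j) :
    ClgGen F l ξ (Fin m) j * ClgGen F l ξ (Fin m) i
      = ξ • (ClgGen F l ξ (Fin m) i * ClgGen F l ξ (Fin m) j) := by
  have h := RingQuot.mkAlgHom_rel F (ClgRel.comm (F := F) (l := l) (ξ := ξ) hij)
  rw [map_mul, map_smul, map_mul] at h
  exact h

lemma clgGen_comm_pow {t i : Fin m} (hti : t < i) (n : ℕ) :
    ClgGen F l ξ (Fin m) i * ClgGen F l ξ (Fin m) t ^ n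
      = ξ ^ n • (ClgGen F l ξ (Fin m) t ^ n * ClgGen F l ξ (Fin m) i) := by
  induction n with
  | zero => simp
  | succ n ih =>
    rw [pow_succ, ← mul_assoc, ih, smul_mul_assoc, mul_assoc, clgGen_comm hti,
      mul_smul_comm, smul_smul, ← mul_assoc, ← pow_succ, ← pow_succ]

lemma clg_comm_list (i : Fin m) (k : Fin m → ℕ) :
    ∀ L : List (Fin m), (∀ t ∈ L, t < i) →
      ∃ c : F, ClgGen F l ξ (Fin m) i * (L.map fun t => ClgGen F l ξ (Fin m) t ^ k t).prod
        = c • ((L.map fun t => ClgGen F l ξ (Fin m) t ^ k t).prod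
            * ClgGen F l ξ (Fin m) i) := by
  intro L
  induction L with
  | nil => exact fun _ => ⟨1, by simp⟩
  | cons t L ih =>
    intro hmem
    obtain ⟨c, hc⟩ := ih fun s hs => hmem s (List.mem_cons_of_mem _ hs)
    refine ⟨ξ ^ k t * c, ?_⟩
    rw [List.map_cons, List.prod_cons, ← mul_assoc,
      clgGen_comm_pow (hmem t (List.mem_cons_self)) (k t), smul_mul_assoc, mul_assoc,
      hc, mul_smul_comm, smul_smul, ← mul_assoc]

/-- Ordered monomial with natural-number exponents. -/
noncomputable def clgM (F : Type*) [Field F] (l : ℕ) (ξ : F) {m : ℕ} (k : Fin m → ℕ) :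
    Clg F l ξ (Fin m) :=
  ((List.finRange m).map fun t => ClgGen F l ξ (Fin m) t ^ k t).prod

lemma clgM_mod (k : Fin m → ℕ) : clgM F l ξ k = clgM F l ξ fun t => k t % l := by
  unfold clgM
  congr 1
  exact List.map_congr_left fun t _ => clgGen_pow_mod t (k t)

lemma clg_left_mul (i : Fin m) (k : Fin m → ℕ) :
    ∃ c : F, ClgGen F l ξ (Fin m) i * clgM F l ξ k
      = c • clgM F l ξ (Function.update k i (k i + 1)) := by
  have hlen : (i : ℕ) < (List.finRange m).length := by simp
  have hget : (List.finRange m)[(i : ℕ)] = i := by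
    apply Fin.ext
    simp [List.getElem_finRange]
  have hsplit : List.finRange m
      = (List.finRange m).take (i : ℕ) ++ i :: (List.finRange m).drop ((i : ℕ) + 1) := by
    conv_lhs => rw [← List.take_append_drop (i : ℕ) (List.finRange m)]
    rw [List.drop_eq_getElem_cons hlen, hget]
  have htake : ∀ t ∈ (List.finRange m).take (i : ℕ), t < i := by
    intro t ht
    obtain ⟨j, hj, rfl⟩ := List.mem_iff_getElem.mp ht
    have hj' : j < (i : ℕ) := by simp [List.length_take] at hj; omega
    rw [List.getElem_take, List.getElem_finRange]
    simpa [Fin.lt_def] using hj'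
  have hdrop : ∀ t ∈ (List.finRange m).drop ((i : ℕ) + 1), (i : ℕ) < (t : ℕ) := by
    intro t ht
    obtain ⟨j, hj, rfl⟩ := List.mem_iff_getElem.mp ht
    rw [List.getElem_drop, List.getElem_finRange]
    simp only [Fin.coe_cast]
    omega
  have h1 : ((List.finRange m).take (i : ℕ)).map
        (fun t => ClgGen F l ξ (Fin m) t ^ Function.update k i (k i + 1) t)
      = ((List.finRange m).take (i : ℕ)).map fun t => ClgGen F l ξ (Fin m) t ^ k t :=
    List.map_congr_left fun t ht => by rw [Function.update_of_ne (htake t ht).ne]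
  have h2 : ((List.finRange m).drop ((i : ℕ) + 1)).map
        (fun t => ClgGen F l ξ (Fin m) t ^ Function.update k i (k i + 1) t)
      = ((List.finRange m).drop ((i : ℕ) + 1)).map fun t => ClgGen F l ξ (Fin m) t ^ k t := by
    refine List.map_congr_left fun t ht => ?_
    have hne : t ≠ i := by
      intro h
      exact absurd (hdrop t ht) (by simp [h])
    rw [Function.update_of_ne hne]
  obtain ⟨c, hc⟩ := clg_comm_list (F := F) (l := l) (ξ := ξ) i k _ htake
  refine ⟨c, ?_⟩
  have hM : clgM F l ξ k
      = (((List.finRange m).take (i : ℕ)).map fun t => ClgGen F l ξ (Fin m) t ^ k t).prod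
        * (ClgGen F l ξ (Fin m) i ^ k i
          * (((List.finRange m).drop ((i : ℕ) + 1)).map
              fun t => ClgGen F l ξ (Fin m) t ^ k t).prod) := by
    simp only [clgM]
    conv_lhs => rw [hsplit]
    rw [List.map_append, List.prod_append, List.map_cons, List.prod_cons]
  have hM' : clgM F l ξ (Function.update k i (k i + 1))
      = (((List.finRange m).take (i : ℕ)).map fun t => ClgGen F l ξ (Fin m) t ^ k t).prod
        * (ClgGen F l ξ (Fin m) i ^ (k i + 1)
          * (((List.finRange m).drop ((i : ℕ) + 1)).map
              fun t => ClgGen F l ξ (Fin m) t ^ k t).prod) := by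
    simp only [clgM]
    conv_lhs => rw [hsplit]
    rw [List.map_append, List.prod_append, List.map_cons, List.prod_cons,
      Function.update_self, h1, h2]
  rw [hM, hM', ← mul_assoc, hc, smul_mul_assoc, mul_assoc]
  congr 1
  rw [← mul_assoc (ClgGen F l ξ (Fin m) i) (ClgGen F l ξ (Fin m) i ^ k i), ← pow_succ']

end ClgAux

theorem stmt_9 (F : Type*) [Field F] (l : ℕ) (hl : 1 < l) (hchar : (l : F) ≠ 0)
    (ξ : F) (hξ : IsPrimitiveRoot ξ l) (m : ℕ) (hm : 0 < m) :
    Module.finrank F (Clg F l ξ (Fin m)) = l ^ m ∧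
      ∃ B : Module.Basis (Fin m → Fin l) F (Clg F l ξ (Fin m)),
        ∀ k : Fin m → Fin l,
          B k = ((List.finRange m).map fun i =>
            ClgGen F l ξ (Fin m) i ^ (k i : ℕ)).prod := by
  haveI : NeZero l := ⟨by omega⟩
  have hξl : ξ ^ l = 1 := hξ.pow_eq_one
  set Mf : (Fin m → Fin l) → Clg F l ξ (Fin m) := fun k =>
    ((List.finRange m).map fun i => ClgGen F l ξ (Fin m) i ^ (k i : ℕ)).prod with hMf
  have hli : LinearIndependent F Mf := by
    let φ : Clg F l ξ (Fin m) →ₗ[F] ((Fin m → ZMod l) → F) :=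
      { toFun := fun a => clgRep F l ξ m hl hξl a (clgB F l m 0)
        map_add' := by intro a b; simp
        map_smul' := by intro r a; simp }
    have hemb : Function.Injective
        (fun k : Fin m → Fin l => fun t => ((k t : ℕ) : ZMod l)) := by
      intro k k' h
      funext t
      have h1 := congrFun h t
      have hv := congrArg ZMod.val h1
      rw [ZMod.val_natCast_of_lt (k t).isLt, ZMod.val_natCast_of_lt (k' t).isLt] at hv
      exact Fin.ext hv
    have hcomp : LinearIndependent F (φ ∘ Mf) := by
      have heq : φ ∘ Mf = (clgB F l m) ∘
          (fun k : Fin m → Fin l => fun t => ((k t : ℕ) : ZMod l)) := by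
        funext k
        show clgRep F l ξ m hl hξl (Mf k) (clgB F l m 0) = _
        exact clg_eval hl hξl k
      rw [heq]
      exact (clgB F l m).linearIndependent.comp _ hemb
    exact LinearIndependent.of_comp φ hcomp
  have hspan : ∀ a : Clg F l ξ (Fin m), a ∈ Submodule.span F (Set.range Mf) := by
    set S := Submodule.span F (Set.range Mf) with hS
    have hMnat : ∀ k : Fin m → ℕ, clgM F l ξ k ∈ S := by
      intro k
      rw [clgM_mod]
      have heq : clgM F l ξ (fun t => k t % l)
          = Mf (fun t => ⟨k t % l, Nat.mod_lt _ (by omega)⟩) := rfl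
      rw [heq]
      exact Submodule.subset_span ⟨_, rfl⟩
    have hgen : ∀ i : Fin m, ∀ s ∈ S, ClgGen F l ξ (Fin m) i * s ∈ S := by
      intro i s hs
      induction hs using Submodule.span_induction with
      | mem x hx =>
        obtain ⟨k, rfl⟩ := hx
        have hMk : Mf k = clgM F l ξ (fun t => (k t : ℕ)) := rfl
        obtain ⟨c, hc⟩ := clg_left_mul (F := F) (l := l) (ξ := ξ) i (fun t => (k t : ℕ))
        rw [hMk, hc]
        exact Submodule.smul_mem _ _ (hMnat _)
      | zero => rw [mul_zero]; exact Submodule.zero_mem _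
      | add x y hx hy ihx ihy => rw [mul_add]; exact Submodule.add_mem _ ihx ihy
      | smul a x hx ihx => rw [mul_smul_comm]; exact Submodule.smul_mem _ _ ihx
    have hadj : ∀ a : Clg F l ξ (Fin m),
        a ∈ Algebra.adjoin F (Set.range (ClgGen F l ξ (Fin m))) := by
      intro a
      have htop : Algebra.adjoin F (Set.range (ClgGen F l ξ (Fin m))) = ⊤ := by
        have h1 : Set.range (ClgGen F l ξ (Fin m))
            = (RingQuot.mkAlgHom F (ClgRel F l ξ)) ''
                Set.range (FreeAlgebra.ι F (X := Fin m)) := by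
          rw [← Set.range_comp]; rfl
        rw [h1, ← AlgHom.map_adjoin, FreeAlgebra.adjoin_range_ι, Algebra.map_top]
        exact (AlgHom.range_eq_top _).mpr (RingQuot.mkAlgHom_surjective F _)
      rw [htop]; trivial
    have hone : (1 : Clg F l ξ (Fin m)) ∈ S := by
      have h1 : Mf (fun _ => ⟨0, by omega⟩) = 1 := by
        simp [hMf]
      rw [← h1]
      exact Submodule.subset_span ⟨_, rfl⟩
    intro a
    have key : ∀ s ∈ S, a * s ∈ S := by
      induction hadj a using Algebra.adjoin_induction with
      | mem x hx =>
        obtain ⟨i, rfl⟩ := hx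
        exact hgen i
      | algebraMap r =>
        intro s hs
        rw [← Algebra.smul_def]
        exact Submodule.smul_mem _ _ hs
      | add x y hx hy ihx ihy =>
        intro s hs
        rw [add_mul]
        exact Submodule.add_mem _ (ihx s hs) (ihy s hs)
      | mul x y hx hy ihx ihy =>
        intro s hs
        rw [mul_assoc]
        exact ihx _ (ihy s hs)
    simpa using key 1 hone
  have hsp : ⊤ ≤ Submodule.span F (Set.range Mf) := fun a _ => hspan a
  refine ⟨?_, Module.Basis.mk hli hsp, fun k => Module.Basis.mk_apply hli hsp k⟩
  rw [Module.finrank_eq_card_basis (Module.Basis.mk hli hsp)]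
  simp [Fintype.card_fun]
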